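/- Asymptotically optimal number of channels (continuous relaxation of Corollary 1): let β > 1 and for k > 0 let M*(k) be the unique maximizer on (0, ∞) of M ↦ M^(−1)·ln(1 + k·M^β). Then M*(k) = (s*/k)^(1/β) for the unique s* > 0 with (1 + 1/s*)·ln(1 + s*) = β, hence M*(k) → ∞ as k → 0⁺ and M*(k) → 0 as k → ∞. -/

import Mathlib

open Filter Real Set


noncomputable def gg (s : ℝ) : ℝ := (1 + 1 / s) * Real.log (1 + s)

lemma hasDerivAt_gg {s : ℝ} (hs : 0 < s) :
    HasDerivAt gg ((s - Real.log (1 + s)) / s ^ 2) s := by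
  have h1 : HasDerivAt (fun x : ℝ => 1 + 1 / x) (-(s ^ 2)⁻¹) s := by
    simpa [one_div] using (hasDerivAt_inv hs.ne').const_add 1
  have h2 : HasDerivAt (fun x : ℝ => Real.log (1 + x)) (1 / (1 + s)) s := by
    simpa using ((hasDerivAt_id s).const_add 1).log (by positivity)
  have := h1.mul h2
  refine this.congr_deriv ?_
  have h1s : (1:ℝ) + s ≠ 0 := by positivity
  field_simp
  ring

lemma gg_strictMonoOn : StrictMonoOn gg (Ioi 0) := by
  apply strictMonoOn_of_deriv_pos (convex_Ioi 0)
  · intro x hx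
    exact ((hasDerivAt_gg hx).differentiableAt.continuousAt).continuousWithinAt
  · intro x hx
    rw [interior_Ioi] at hx
    have hx' : (0:ℝ) < x := hx
    rw [(hasDerivAt_gg hx).deriv]
    have hlog : Real.log (1 + x) < x := by
      have := Real.log_lt_sub_one_of_pos (x := 1 + x) (by linarith) (by linarith)
      linarith
    exact div_pos (by linarith) (by positivity)

noncomputable def hh (β u : ℝ) : ℝ := Real.log (1 + u) * u ^ (-1 / β)

lemma hasDerivAt_hh {β u : ℝ} (hu : 0 < u) :
    HasDerivAt (hh β)
      (u ^ (-1 / β - 1) * (u / (1 + u) + Real.log (1 + u) * (-1 / β))) u := by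
  have h2 : HasDerivAt (fun x : ℝ => Real.log (1 + x)) (1 / (1 + u)) u := by
    simpa using ((hasDerivAt_id u).const_add 1).log (by positivity)
  have h3 : HasDerivAt (fun x : ℝ => x ^ (-1 / β)) (-1 / β * u ^ (-1 / β - 1)) u :=
    Real.hasDerivAt_rpow_const (Or.inl hu.ne')
  have := h2.mul h3
  refine this.congr_deriv ?_
  have hpow : u ^ (-1 / β) = u ^ (-1 / β - 1) * u := by
    rw [← Real.rpow_add_one hu.ne']; ring_nf
  rw [hpow]
  have h1u : (1:ℝ) + u ≠ 0 := by positivity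
  field_simp

lemma hh_deriv_pos {β u : ℝ} (hβ : 1 < β) (hu : 0 < u) (hg : gg u < β) :
    0 < u ^ (-1 / β - 1) * (u / (1 + u) + Real.log (1 + u) * (-1 / β)) := by
  have hβ0 : (0:ℝ) < β := by linarith
  have h1u : (0:ℝ) < 1 + u := by linarith
  set L := Real.log (1 + u) with hL
  have h' : (1 + u) * L < β * u := by
    have h2 := mul_lt_mul_of_pos_right hg hu
    have h4 : (1 + 1 / u) * u = 1 + u := by field_simp; ring
    have h3 : (1 + 1 / u) * L * u = (1 + u) * L := by
      calc (1 + 1 / u) * L * u = ((1 + 1 / u) * u) * L := by ring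
        _ = (1 + u) * L := by rw [h4]
    rw [gg, ← hL, h3] at h2; linarith
  have hfac : 0 < u / (1 + u) + L * (-1 / β) := by
    have : L / β < u / (1 + u) := by
      rw [div_lt_div_iff₀ hβ0 h1u]; nlinarith
    have hrw : L * (-1 / β) = -(L / β) := by ring
    rw [hrw]; linarith
  exact mul_pos (Real.rpow_pos_of_pos hu _) hfac

lemma hh_deriv_neg {β u : ℝ} (hβ : 1 < β) (hu : 0 < u) (hg : β < gg u) :
    u ^ (-1 / β - 1) * (u / (1 + u) + Real.log (1 + u) * (-1 / β)) < 0 := by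
  have hβ0 : (0:ℝ) < β := by linarith
  have h1u : (0:ℝ) < 1 + u := by linarith
  set L := Real.log (1 + u) with hL
  have h' : β * u < (1 + u) * L := by
    have h2 := mul_lt_mul_of_pos_right hg hu
    have h4 : (1 + 1 / u) * u = 1 + u := by field_simp; ring
    have h3 : (1 + 1 / u) * L * u = (1 + u) * L := by
      calc (1 + 1 / u) * L * u = ((1 + 1 / u) * u) * L := by ring
        _ = (1 + u) * L := by rw [h4]
    rw [gg, ← hL, h3] at h2; linarith
  have hfac : u / (1 + u) + L * (-1 / β) < 0 := by
    have : u / (1 + u) < L / β := by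
      rw [div_lt_div_iff₀ h1u hβ0]; nlinarith
    have hrw : L * (-1 / β) = -(L / β) := by ring
    rw [hrw]; linarith
  exact mul_neg_of_pos_of_neg (Real.rpow_pos_of_pos hu _) hfac

lemma hh_lt {β s : ℝ} (hβ : 1 < β) (hs : 0 < s) (hgs : gg s = β) :
    ∀ u, 0 < u → u ≠ s → hh β u < hh β s := by
  have hmono : StrictMonoOn (hh β) (Ioc 0 s) := by
    apply strictMonoOn_of_deriv_pos (convex_Ioc 0 s)
    · intro x hx
      exact ((hasDerivAt_hh (hx.1)).differentiableAt.continuousAt).continuousWithinAt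
    · intro x hx
      rw [interior_Ioc] at hx
      rw [(hasDerivAt_hh hx.1).deriv]
      exact hh_deriv_pos hβ hx.1 (hgs ▸ gg_strictMonoOn hx.1 hs hx.2)
  have hanti : StrictAntiOn (hh β) (Ici s) := by
    apply strictAntiOn_of_deriv_neg (convex_Ici s)
    · intro x hx
      have hx0 : 0 < x := lt_of_lt_of_le hs hx
      exact ((hasDerivAt_hh hx0).differentiableAt.continuousAt).continuousWithinAt
    · intro x hx
      rw [interior_Ici] at hx
      have hx0 : 0 < x := lt_trans hs hx
      rw [(hasDerivAt_hh hx0).deriv]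
      exact hh_deriv_neg hβ hx0 (hgs ▸ gg_strictMonoOn hs hx0 hx)
  intro u hu hus
  rcases lt_or_gt_of_ne hus with h | h
  · exact hmono ⟨hu, h.le⟩ ⟨hs, le_refl s⟩ h
  · exact hanti (mem_Ici.mpr (le_refl s)) (mem_Ici.mpr h.le) h

lemma f_eq {β k M : ℝ} (hβ : 1 < β) (hk : 0 < k) (hM : 0 < M) :
    M⁻¹ * Real.log (1 + k * M ^ β) = k ^ (1 / β) * hh β (k * M ^ β) := by
  have hβ0 : β ≠ 0 := by positivity
  rw [hh]
  have h1 : (k * M ^ β) ^ (-1 / β) = k ^ (-1 / β) * M⁻¹ := by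
    rw [Real.mul_rpow hk.le (Real.rpow_nonneg hM.le β), ← Real.rpow_mul hM.le,
      show β * (-1 / β) = -1 by field_simp, Real.rpow_neg_one]
  rw [h1]
  have h2 : k ^ (1 / β) * k ^ (-1 / β) = 1 := by
    rw [← Real.rpow_add hk, show 1 / β + -1 / β = 0 by ring, Real.rpow_zero]
  calc M⁻¹ * Real.log (1 + k * M ^ β)
      = (k ^ (1 / β) * k ^ (-1 / β)) * (Real.log (1 + k * M ^ β) * M⁻¹) := by
        rw [h2]; ring
    _ = k ^ (1 / β) * (Real.log (1 + k * M ^ β) * (k ^ (-1 / β) * M⁻¹)) := by ring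

lemma gg_exists {β : ℝ} (hβ : 1 < β) : ∃ s : ℝ, 0 < s ∧ gg s = β := by
  set s₀ : ℝ := (β - 1) / 2 with hs₀def
  set s₁ : ℝ := Real.exp β with hs₁def
  have hs₀ : 0 < s₀ := by rw [hs₀def]; linarith
  have hs₁ : 0 < s₁ := Real.exp_pos β
  have h01 : s₀ ≤ s₁ := by
    have := Real.add_one_le_exp β
    rw [hs₀def, hs₁def]; linarith
  have hcont : ContinuousOn gg (Icc s₀ s₁) := by
    intro x hx
    have hx0 : 0 < x := lt_of_lt_of_le hs₀ hx.1
    exact ((hasDerivAt_gg hx0).differentiableAt.continuousAt).continuousWithinAt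
  have hlow : gg s₀ ≤ β := by
    have hlog : Real.log (1 + s₀) ≤ s₀ := by
      have := Real.log_le_sub_one_of_pos (x := 1 + s₀) (by linarith)
      linarith
    have hpos : (0:ℝ) < 1 + 1 / s₀ := by positivity
    have := mul_le_mul_of_nonneg_left hlog hpos.le
    have hrw : (1 + 1 / s₀) * s₀ = 1 + s₀ := by field_simp; ring
    rw [gg]
    rw [hrw] at this
    rw [hs₀def] at *
    linarith
  have hhigh : β ≤ gg s₁ := by
    have hlog : β ≤ Real.log (1 + s₁) := by
      have h1 : Real.log s₁ ≤ Real.log (1 + s₁) := Real.log_le_log hs₁ (by linarith)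
      rw [hs₁def] at h1 ⊢
      rwa [Real.log_exp] at h1
    have h2 : (1:ℝ) ≤ 1 + 1 / s₁ := by
      have : 0 < 1 / s₁ := by positivity
      linarith
    rw [gg]
    nlinarith
  obtain ⟨s, hsmem, hgs⟩ := intermediate_value_Icc h01 hcont ⟨hlow, hhigh⟩
  exact ⟨s, lt_of_lt_of_le hs₀ hsmem.1, hgs⟩

/-- Asymptotically optimal number of channels (continuous relaxation of Corollary 1):
for `β > 1`, letting `M*(k)` be the unique maximizer on `(0,∞)` of
`M ↦ M⁻¹·ln(1 + k·M^β)` for each `k > 0`, one has `M*(k) = (s*/k)^(1/β)` for the unique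
`s* > 0` with `(1 + 1/s*)·ln(1 + s*) = β`; hence `M*(k) → ∞` as `k → 0⁺` and
`M*(k) → 0` as `k → ∞`. -/
theorem asymptotically_optimal_channels (β : ℝ) (hβ : 1 < β) :
    ∃ s : ℝ, 0 < s ∧ (1 + 1 / s) * Real.log (1 + s) = β ∧
      (∀ s' : ℝ, 0 < s' → (1 + 1 / s') * Real.log (1 + s') = β → s' = s) ∧
      ∃ Mstar : ℝ → ℝ,
        (∀ k : ℝ, 0 < k → Mstar k = (s / k) ^ (1 / β)) ∧
        (∀ k : ℝ, 0 < k → 0 < Mstar k ∧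
          (∀ M : ℝ, 0 < M →
            M⁻¹ * Real.log (1 + k * M ^ β) ≤
              (Mstar k)⁻¹ * Real.log (1 + k * (Mstar k) ^ β)) ∧
          (∀ M : ℝ, 0 < M →
            (∀ M' : ℝ, 0 < M' →
              M'⁻¹ * Real.log (1 + k * M' ^ β) ≤ M⁻¹ * Real.log (1 + k * M ^ β)) →
            M = Mstar k)) ∧
        Filter.Tendsto Mstar (nhdsWithin 0 (Set.Ioi 0)) Filter.atTop ∧
        Filter.Tendsto Mstar Filter.atTop (nhds 0) := by
  obtain ⟨s, hs, hgs⟩ := gg_exists hβ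
  have hβ0 : (0:ℝ) < β := by linarith
  have hβne : β ≠ 0 := hβ0.ne'
  refine ⟨s, hs, hgs, ?_, ?_⟩
  · intro s' hs' hgs'
    exact gg_strictMonoOn.injOn (mem_Ioi.mpr hs') (mem_Ioi.mpr hs)
      (show gg s' = gg s from hgs'.trans hgs.symm)
  · refine ⟨fun k => (s / k) ^ (1 / β), fun k hk => rfl, ?_, ?_, ?_⟩
    · intro k hk
      have hsk : 0 < s / k := div_pos hs hk
      have hMpos : 0 < (s / k) ^ (1 / β) := Real.rpow_pos_of_pos hsk _
      have hkey : k * ((s / k) ^ (1 / β)) ^ β = s := by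
        rw [← Real.rpow_mul hsk.le, show 1 / β * β = 1 by field_simp, Real.rpow_one]
        field_simp
      have hmaxle : ∀ M : ℝ, 0 < M →
          M⁻¹ * Real.log (1 + k * M ^ β) ≤
            ((s / k) ^ (1 / β))⁻¹ * Real.log (1 + k * ((s / k) ^ (1 / β)) ^ β) := by
        intro M hM
        rw [f_eq hβ hk hM, f_eq hβ hk hMpos, hkey]
        have hu : 0 < k * M ^ β := mul_pos hk (Real.rpow_pos_of_pos hM β)
        have hle : hh β (k * M ^ β) ≤ hh β s := by
          rcases eq_or_ne (k * M ^ β) s with h | h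
          · rw [h]
          · exact (hh_lt hβ hs hgs _ hu h).le
        exact mul_le_mul_of_nonneg_left hle (Real.rpow_pos_of_pos hk _).le
      refine ⟨hMpos, hmaxle, ?_⟩
      intro M hM hmax
      have hu : 0 < k * M ^ β := mul_pos hk (Real.rpow_pos_of_pos hM β)
      have heq := le_antisymm (hmaxle M hM) (hmax ((s / k) ^ (1 / β)) hMpos)
      rw [f_eq hβ hk hM, f_eq hβ hk hMpos, hkey] at heq
      have hne : (k:ℝ) ^ (1 / β) ≠ 0 := (Real.rpow_pos_of_pos hk _).ne'
      have heq2 : hh β (k * M ^ β) = hh β s := mul_left_cancel₀ hne heq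
      have hus : k * M ^ β = s := by
        by_contra h
        exact (hh_lt hβ hs hgs _ hu h).ne heq2
      have hMβ : M ^ β = s / k := by rw [eq_div_iff hk.ne']; linarith [hus]
      show M = (s / k) ^ (1 / β)
      rw [← hMβ, ← Real.rpow_mul hM.le, show β * (1 / β) = 1 by field_simp,
        Real.rpow_one]
    · have h1 : Tendsto (fun k : ℝ => s * k⁻¹) (nhdsWithin 0 (Ioi 0)) atTop :=
        tendsto_inv_nhdsGT_zero.const_mul_atTop hs
      have h2 := (tendsto_rpow_atTop (y := 1 / β) (by positivity)).comp h1
      refine h2.congr fun k => ?_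
      simp [Function.comp, div_eq_mul_inv]
    · have h0 : Tendsto (fun k : ℝ => ((k : ℝ) ^ (1 / β))⁻¹) atTop (nhds 0) := by
        exact (tendsto_rpow_atTop (y := 1 / β) (by positivity)).inv_tendsto_atTop
      have h1 : Tendsto (fun k : ℝ => s ^ (1 / β) * (k ^ (1 / β))⁻¹) atTop (nhds 0) := by
        simpa using h0.const_mul (s ^ (1 / β))
      have hev : (fun k : ℝ => s ^ (1 / β) * (k ^ (1 / β))⁻¹)
          =ᶠ[atTop] fun k => (s / k) ^ (1 / β) := by
        filter_upwards [eventually_gt_atTop (0:ℝ)] with k hk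
        rw [Real.div_rpow hs.le hk.le]
        exact (div_eq_mul_inv _ _).symm
      exact h1.congr' hev
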